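/- Let X be a Banach lattice and x₀ ∈ X a positive atom whose generated ideal is a projection band with coordinate functional λ. Then for any equivalent lattice norm on X, λ attains its norm at x₀/‖x₀‖. -/

import Mathlib

/-- A real-valued lattice homomorphism on a Banach lattice. -/
def IsLatticeHomFunctional {X : Type*} [NormedAddCommGroup X] [Lattice X] [IsOrderedAddMonoid X] [HasSolidNorm X] [NormedSpace ℝ X]
    (f : X →L[ℝ] ℝ) : Prop :=
  ∀ x y : X, f (x ⊔ y) = max (f x) (f y)

/-- An atom of a Banach lattice: a positive element generating a one-dimensional ideal. -/
def IsLatAtom {X : Type*} [NormedAddCommGroup X] [Lattice X] [IsOrderedAddMonoid X] [HasSolidNorm X] [NormedSpace ℝ X] (x₀ : X) : Prop :=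
  0 < x₀ ∧ ∀ y : X, 0 ≤ y → y ≤ x₀ → ∃ r : ℝ, y = r • x₀

/-- `l` is the coordinate functional of the atom `x₀`: the band projection onto the span of
`x₀` is `x ↦ l x • x₀`, i.e. `x - l x • x₀` is disjoint from `x₀` for every `x`. -/
def IsCoordinateFunctional {X : Type*} [NormedAddCommGroup X] [Lattice X] [IsOrderedAddMonoid X] [HasSolidNorm X] [NormedSpace ℝ X]
    (l : X →L[ℝ] ℝ) (x₀ : X) : Prop :=
  ∀ x : X, |x - l x • x₀| ⊓ x₀ = 0

/-- An equivalent lattice norm on `X`. -/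
structure LatticeNorm (X : Type*) [NormedAddCommGroup X] [Lattice X] [NormedSpace ℝ X] where
  n : X → ℝ
  add_le : ∀ x y : X, n (x + y) ≤ n x + n y
  smul_eq : ∀ (r : ℝ) (x : X), n (r • x) = |r| * n x
  eq_zero_of : ∀ x : X, n x = 0 → x = 0
  mono : ∀ x y : X, |x| ≤ |y| → n x ≤ n y
  lower : ∃ c : ℝ, 0 < c ∧ ∀ x : X, c * ‖x‖ ≤ n x
  upper : ∃ C : ℝ, 0 < C ∧ ∀ x : X, n x ≤ C * ‖x‖

section Aux
set_option linter.unusedSectionVars false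
variable {X : Type*} [NormedAddCommGroup X] [Lattice X] [IsOrderedAddMonoid X] [HasSolidNorm X] [NormedSpace ℝ X]

private lemma aux_inf_add_le (a b c : X) (ha : 0 ≤ a) (hb : 0 ≤ b) (hc : 0 ≤ c) :
    a ⊓ (b + c) ≤ a ⊓ b + a ⊓ c := by
  have h1 : a ⊓ (b + c) ≤ a := inf_le_left
  have h2 : a ⊓ (b + c) ≤ b + c := inf_le_right
  have h3 : (0 : X) ≤ a ⊓ c := le_inf ha hc
  rw [← sub_le_iff_le_add]
  refine le_inf ?_ ?_
  · calc a ⊓ (b + c) - a ⊓ c ≤ a - 0 := sub_le_sub h1 h3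
      _ = a := sub_zero a
  · rw [sub_le_iff_le_add, add_comm b (a ⊓ c), ← sub_le_iff_le_add]
    refine le_inf ?_ ?_
    · calc a ⊓ (b + c) - b ≤ a - 0 := sub_le_sub h1 hb
        _ = a := sub_zero a
    · calc a ⊓ (b + c) - b ≤ (b + c) - b := sub_le_sub h2 le_rfl
        _ = c := by abel

private lemma aux_disjoint_add (a b c : X) (ha : 0 ≤ a) (hb : 0 ≤ b) (hc : 0 ≤ c)
    (hab : a ⊓ b = 0) (hac : a ⊓ c = 0) : a ⊓ (b + c) = 0 := by
  refine le_antisymm ?_ (le_inf ha (add_nonneg hb hc))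
  calc a ⊓ (b + c) ≤ a ⊓ b + a ⊓ c := aux_inf_add_le a b c ha hb hc
    _ = 0 := by rw [hab, hac, add_zero]

private lemma aux_disjoint_nsmul (a b : X) (ha : 0 ≤ a) (hb : 0 ≤ b) (hab : a ⊓ b = 0) :
    ∀ n : ℕ, a ⊓ (n • b) = 0 := by
  intro n
  induction n with
  | zero => simpa using inf_eq_right.mpr ha
  | succ k ih =>
      rw [succ_nsmul]
      exact aux_disjoint_add a (k • b) b ha (nsmul_nonneg hb k) hb ih hab

private lemma aux_nonneg_of_nsmul (y : X) (n : ℕ) (hn : 1 ≤ n) (h : 0 ≤ n • y) : 0 ≤ y := by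
  have hpn : y⁻ ⊓ (n • y⁺) = 0 :=
    aux_disjoint_nsmul y⁻ y⁺ (negPart_nonneg y) (posPart_nonneg y)
      (by rw [inf_comm]; exact posPart_inf_negPart_eq_zero y) n
  have h2 : n • y⁻ ≤ n • y⁺ := by
    have h0 : 0 ≤ n • y⁺ - n • y⁻ := by rw [← smul_sub, posPart_sub_negPart]; exact h
    exact sub_nonneg.mp h0
  have h3 : y⁻ ≤ n • y⁻ := by
    calc y⁻ = 1 • y⁻ := (one_smul ℕ y⁻).symm
      _ ≤ n • y⁻ := nsmul_le_nsmul_left (negPart_nonneg y) hn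
  have h4 : y⁻ ≤ 0 := by
    have := le_inf (le_refl y⁻) (h3.trans h2)
    rwa [hpn] at this
  exact negPart_eq_zero.mp (le_antisymm h4 (negPart_nonneg y))

private lemma aux_smul_nonneg (r : ℝ) (x : X) (hr : 0 ≤ r) (hx : 0 ≤ x) : 0 ≤ r • x := by
  have hq : ∀ q : ℚ, 0 ≤ q → 0 ≤ (q : ℝ) • x := by
    intro q hq0
    refine aux_nonneg_of_nsmul _ q.den q.pos ?_
    have hden : (q.den : ℕ) • ((q : ℝ) • x) = q.num.toNat • x := by
      rw [← Nat.cast_smul_eq_nsmul ℝ, ← Nat.cast_smul_eq_nsmul ℝ, smul_smul]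
      congr 1
      have hnum : (q.num.toNat : ℝ) = (q.num : ℝ) := by
        exact_mod_cast Int.toNat_of_nonneg (Rat.num_nonneg.mpr hq0)
      rw [hnum]
      exact_mod_cast Rat.den_mul_eq_num q
    rw [hden]
    exact nsmul_nonneg hx _
  -- pass to the real case by density and closedness of the positive cone
  have hseq : ∀ k : ℕ, ∃ q : ℚ, r < (q : ℝ) ∧ (q : ℝ) < r + 1 / (k + 1) := by
    intro k
    refine exists_rat_btwn ?_
    have hk : (0:ℝ) < 1 / ((k : ℝ) + 1) := by positivity
    linarith
  choose q hq1 hq2 using hseq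
  have htend : Filter.Tendsto (fun k : ℕ => ((q k : ℝ))) Filter.atTop (nhds r) := by
    have h1 : Filter.Tendsto (fun k : ℕ => r + 1 / ((k : ℝ) + 1)) Filter.atTop (nhds (r + 0)) :=
      Filter.Tendsto.const_add r tendsto_one_div_add_atTop_nhds_zero_nat
    rw [add_zero] at h1
    exact tendsto_of_tendsto_of_tendsto_of_le_of_le tendsto_const_nhds h1
      (fun k => (hq1 k).le) (fun k => (hq2 k).le)
  have htend2 : Filter.Tendsto (fun k : ℕ => ((q k : ℝ)) • x) Filter.atTop (nhds (r • x)) :=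
    htend.smul_const x
  have hclosed : IsClosed {z : X | 0 ≤ z} := isClosed_Ici
  have hmem : ∀ k, ((q k : ℝ)) • x ∈ {z : X | 0 ≤ z} := by
    intro k
    have : (0 : ℚ) ≤ q k := by
      have := (hq1 k)
      exact_mod_cast (hr.trans this.le)
    exact hq _ this
  exact hclosed.mem_of_tendsto htend2 (Filter.Eventually.of_forall hmem)

private lemma aux_smul_le_smul (a b : ℝ) (x : X) (hx : 0 ≤ x) (hab : a ≤ b) :
    a • x ≤ b • x := by
  have : 0 ≤ (b - a) • x := aux_smul_nonneg _ x (by linarith) hx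
  rw [sub_smul] at this
  exact sub_nonneg.mp this

private lemma aux_abs_smul (r : ℝ) (x : X) (hx : 0 ≤ x) : |r • x| = |r| • x := by
  rcases le_or_gt 0 r with h | h
  · rw [abs_of_nonneg (aux_smul_nonneg r x h hx), abs_of_nonneg h]
  · rw [← abs_neg, ← neg_smul, abs_of_nonneg (aux_smul_nonneg _ x (by linarith) hx),
      abs_of_neg h]

private lemma aux_proj_le (x₀ y : X) (hx : 0 ≤ x₀) (c : ℝ)
    (h : |y - c • x₀| ⊓ x₀ = 0) : |c • x₀| ≤ |y| := by
  set z := y - c • x₀ with hz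
  set w := c • x₀ with hw
  have hwabs : |w| = |c| • x₀ := aux_abs_smul c x₀ hx
  have hwn : |w| ≤ (⌈|c|⌉₊ : ℕ) • x₀ := by
    rw [hwabs, ← Nat.cast_smul_eq_nsmul ℝ]
    exact aux_smul_le_smul _ _ x₀ hx (Nat.le_ceil _)
  have hdisj : |z| ⊓ |w| = 0 := by
    refine le_antisymm ?_ (le_inf (abs_nonneg z) (abs_nonneg w))
    calc |z| ⊓ |w| ≤ |z| ⊓ ((⌈|c|⌉₊ : ℕ) • x₀) := inf_le_inf_left _ hwn
      _ = 0 := aux_disjoint_nsmul _ _ (abs_nonneg z) hx h _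
  have htri : |w| ≤ |y| + |z| := by
    have : w = y - z := by rw [hz]; abel
    rw [this]
    calc |y - z| = |y + (-z)| := by rw [sub_eq_add_neg]
      _ ≤ |y| + |(-z)| := abs_add_le y (-z)
      _ = |y| + |z| := by rw [abs_neg]
  calc |w| = |w| ⊓ |w| := (inf_idem _).symm
    _ ≤ |w| ⊓ (|y| + |z|) := inf_le_inf_left _ htri
    _ ≤ |w| ⊓ |y| + |w| ⊓ |z| :=
        aux_inf_add_le _ _ _ (abs_nonneg w) (abs_nonneg y) (abs_nonneg z)
    _ = |w| ⊓ |y| := by rw [inf_comm |w| |z|, hdisj, add_zero]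
    _ ≤ |y| := inf_le_right

end Aux

/-- the coordinate functional of an atom attains its norm at `x₀ / ‖x₀‖` for
any equivalent lattice norm. -/
theorem coordinate_functional_attains_norm_for_every_lattice_renorming
    {X : Type*} [NormedAddCommGroup X] [Lattice X] [IsOrderedAddMonoid X] [HasSolidNorm X] [NormedSpace ℝ X] [CompleteSpace X]
    (x₀ : X) (hx₀ : IsLatAtom x₀) (l : X →L[ℝ] ℝ) (hl : IsCoordinateFunctional l x₀)
    (N : LatticeNorm X) :
    N.n ((N.n x₀)⁻¹ • x₀) = 1 ∧
      ∀ y : X, N.n y ≤ 1 → |l y| ≤ l ((N.n x₀)⁻¹ • x₀) := by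
  have hx0pos : (0 : X) < x₀ := hx₀.1
  have hx0ne : x₀ ≠ 0 := hx0pos.ne'
  have hx0nonneg : (0 : X) ≤ x₀ := hx0pos.le
  -- the lattice norm is positive on x₀
  have hN0 : N.n 0 = 0 := by
    have := N.smul_eq 0 0
    simpa using this
  have hNnonneg : ∀ x : X, 0 ≤ N.n x := by
    intro x
    have h1 : N.n (x + (-x)) ≤ N.n x + N.n (-x) := N.add_le x (-x)
    have h2 : N.n (-x) = N.n x := by
      have := N.smul_eq (-1) x
      simpa using this
    rw [add_neg_cancel, hN0, h2] at h1
    linarith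
  set s := N.n x₀ with hs
  have hspos : 0 < s := by
    rcases lt_or_eq_of_le (hNnonneg x₀) with h | h
    · exact h
    · exact absurd (N.eq_zero_of x₀ h.symm) hx0ne
  -- l x₀ = 1
  have hlx₀ : l x₀ = 1 := by
    by_contra hne
    have h := hl x₀
    have hrw : x₀ - l x₀ • x₀ = (1 - l x₀) • x₀ := by rw [sub_smul, one_smul]
    rw [hrw, aux_abs_smul _ _ hx0nonneg] at h
    set t := |1 - l x₀| with ht
    have htpos : 0 < t := abs_pos.mpr (sub_ne_zero.mpr (Ne.symm hne))
    set m := min t 1 with hm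
    have hmpos : 0 < m := lt_min htpos one_pos
    have h1 : m • x₀ ≤ t • x₀ := aux_smul_le_smul _ _ x₀ hx0nonneg (min_le_left _ _)
    have h2 : m • x₀ ≤ x₀ := by
      have := aux_smul_le_smul m 1 x₀ hx0nonneg (min_le_right _ _)
      rwa [one_smul] at this
    have h3 : m • x₀ ≤ 0 := by
      have := le_inf h1 h2
      rwa [h] at this
    have h4 : m • x₀ = 0 := le_antisymm h3 (aux_smul_nonneg m x₀ hmpos.le hx0nonneg)
    have : x₀ = 0 := by
      have := congrArg (fun z => m⁻¹ • z) h4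
      simpa [smul_smul, inv_mul_cancel₀ hmpos.ne'] using this
    exact hx0ne this
  constructor
  · rw [N.smul_eq, abs_of_nonneg (inv_nonneg.mpr hspos.le), inv_mul_cancel₀ hspos.ne']
  · intro y hy
    have hproj : |l y • x₀| ≤ |y| := aux_proj_le x₀ y hx0nonneg (l y) (hl y)
    have hmono : N.n (l y • x₀) ≤ N.n y := N.mono _ _ hproj
    rw [N.smul_eq] at hmono
    have hls : l ((N.n x₀)⁻¹ • x₀) = s⁻¹ := by
      rw [map_smul, hlx₀, smul_eq_mul, mul_one]
    rw [hls]
    have h1 : |l y| * s ≤ 1 := hmono.trans hy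
    rw [inv_eq_one_div]
    exact (le_div_iff₀ hspos).mpr h1
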